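/- Any shortest valid path in the marked cycle has at most 2 turns, and if it has exactly 2 turns then it is of the form c^i b a^j d c^l or a^i d c^j b a^l with k−1 > j > i ≥ 1 and 1 ≤ l ≤ j − i. -/

import Mathlib

/-- The four move types in the marked cycle. -/
inductive Move : Type
  | a | b | c | d
deriving DecidableEq

/-- Where a move from node `x` in `ZMod k` leads. -/
def Move.step {k : ℕ} (x : ZMod k) : Move → ZMod k
  | .a => x - 1
  | .b => x
  | .c => x + 1
  | .d => x

/-- The node covered by a move performed from node `x`. -/
def Move.covers {k : ℕ} (x : ZMod k) : Move → ZMod k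
  | .a => x - 1
  | .b => x
  | .c => x
  | .d => x - 1

/-- The node reached after performing a sequence of moves starting at `s`. -/
def endAt {k : ℕ} (s : ZMod k) : List Move → ZMod k
  | [] => s
  | m :: ms => endAt (Move.step s m) ms

/-- The set of nodes covered by a sequence of moves starting at `s`. -/
def coveredSet {k : ℕ} (s : ZMod k) : List Move → Set (ZMod k)
  | [] => ∅
  | m :: ms => insert (Move.covers s m) (coveredSet (Move.step s m) ms)

/-- A valid path in the marked cycle on `ZMod k` with marked set `B`, start `s`,
end `t`: a nonempty sequence of moves from `s` to `t` covering every node of `B`. -/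
def ValidPath {k : ℕ} (B : Set (ZMod k)) (s t : ZMod k) (p : List Move) : Prop :=
  p ≠ [] ∧ endAt s p = t ∧ B ⊆ coveredSet s p

/-- A shortest valid path: valid and of minimum length among all valid paths. -/
def ShortestPath {k : ℕ} (B : Set (ZMod k)) (s t : ZMod k) (p : List Move) : Prop :=
  ValidPath B s t p ∧ ∀ q : List Move, ValidPath B s t q → p.length ≤ q.length

/-- The number of turns (a-turns `cba` and c-turns `adc`) in a path. -/
def turnCount (p : List Move) : ℕ :=
  ((List.range p.length).filter (fun i =>
    (p.drop i).take 3 = [Move.c, Move.b, Move.a] ∨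
    (p.drop i).take 3 = [Move.a, Move.d, Move.c])).length

-- ### auxiliary lemmas


abbrev rC (n : ℕ) : List Move := List.replicate n Move.c
abbrev rA (n : ℕ) : List Move := List.replicate n Move.a

lemma endAt_append {k : ℕ} (s : ZMod k) (u v : List Move) :
    endAt s (u ++ v) = endAt (endAt s u) v := by
  induction u generalizing s with
  | nil => simp [endAt]
  | cons m ms ih => simp [endAt, ih]

lemma coveredSet_append {k : ℕ} (s : ZMod k) (u v : List Move) :
    coveredSet s (u ++ v) = coveredSet s u ∪ coveredSet (endAt s u) v := by
  induction u generalizing s with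
  | nil => simp [coveredSet, endAt]
  | cons m ms ih => simp [coveredSet, endAt, ih, Set.insert_union]

lemma endAt_rC {k : ℕ} (x : ZMod k) (n : ℕ) : endAt x (rC n) = x + n := by
  induction n generalizing x with
  | zero => simp [endAt]
  | succ n ih => simp [List.replicate_succ, endAt, Move.step, ih]; push_cast; ring

lemma endAt_rA {k : ℕ} (x : ZMod k) (n : ℕ) : endAt x (rA n) = x - n := by
  induction n generalizing x with
  | zero => simp [endAt]
  | succ n ih => simp [List.replicate_succ, endAt, Move.step, ih]; push_cast; ring

lemma mem_cov_rC {k : ℕ} (x y : ZMod k) (n : ℕ) :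
    y ∈ coveredSet x (rC n) ↔ ∃ z : ℤ, 0 ≤ z ∧ z < (n : ℤ) ∧ y = x + (z : ZMod k) := by
  induction n generalizing x with
  | zero => simp [coveredSet]; intro z h1 h2; omega
  | succ n ih =>
    simp only [List.replicate_succ, coveredSet, Move.step, Move.covers, Set.mem_insert_iff, ih]
    constructor
    · rintro (rfl | ⟨z, h1, h2, rfl⟩)
      · exact ⟨0, by omega, by omega, by push_cast; ring⟩
      · exact ⟨z + 1, by omega, by omega, by push_cast; ring⟩
    · rintro ⟨z, h1, h2, rfl⟩
      rcases eq_or_lt_of_le h1 with h | h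
      · left; rw [← h]; push_cast; ring
      · right; exact ⟨z - 1, by omega, by omega, by push_cast; ring⟩

lemma mem_cov_rA {k : ℕ} (x y : ZMod k) (n : ℕ) :
    y ∈ coveredSet x (rA n) ↔ ∃ z : ℤ, 0 ≤ z ∧ z < (n : ℤ) ∧ y = x - ((z : ZMod k) + 1) := by
  induction n generalizing x with
  | zero => simp [coveredSet]; intro z h1 h2; omega
  | succ n ih =>
    simp only [List.replicate_succ, coveredSet, Move.step, Move.covers, Set.mem_insert_iff, ih]
    constructor
    · rintro (rfl | ⟨z, h1, h2, rfl⟩)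
      · exact ⟨0, by omega, by omega, by push_cast; ring⟩
      · exact ⟨z + 1, by omega, by omega, by push_cast; ring⟩
    · rintro ⟨z, h1, h2, rfl⟩
      rcases eq_or_lt_of_le h1 with h | h
      · left; rw [← h]; push_cast; ring
      · right; exact ⟨z - 1, by omega, by omega, by push_cast; ring⟩

lemma not_shortest_replace {k : ℕ} {B : Set (ZMod k)} {s t : ZMod k} {w w' v : List Move}
    (hp : ShortestPath B s t (w ++ v)) (hne : w' ≠ [])
    (hend : endAt s w' = endAt s w) (hcov : coveredSet s w ⊆ coveredSet s w')
    (hlen : w'.length < w.length) : False := by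
  obtain ⟨⟨hnil, hend0, hcov0⟩, hmin⟩ := hp
  have hq : ValidPath B s t (w' ++ v) := by
    refine ⟨by simp [hne], ?_, ?_⟩
    · rw [endAt_append, hend, ← endAt_append, hend0]
    · intro b hb
      have := hcov0 hb
      rw [coveredSet_append] at this ⊢
      rw [hend]
      rcases this with h | h
      · exact Or.inl (hcov h)
      · exact Or.inr h
  have := hmin _ hq
  simp only [List.length_append] at this
  omega

def SP {k : ℕ} (p : List Move) : Prop := ∃ (B : Set (ZMod k)) (s t : ZMod k), ShortestPath B s t p

lemma SP_tail {k : ℕ} {m : Move} {p : List Move} (h : SP (k := k) (m :: p)) (hne : p ≠ []) :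
    SP (k := k) p := by
  obtain ⟨B, s, t, ⟨⟨_, hend, hcov⟩, hmin⟩⟩ := h
  refine ⟨B ∩ coveredSet (Move.step s m) p, Move.step s m, t, ⟨⟨hne, ?_, ?_⟩, ?_⟩⟩
  · exact hend
  · exact Set.inter_subset_right
  · intro q hq
    have hq' : ValidPath B s t (m :: q) := by
      refine ⟨by simp, ?_, ?_⟩
      · show endAt (Move.step s m) q = t
        exact hq.2.1
      · intro b hb
        have := hcov hb
        simp only [coveredSet, Set.mem_insert_iff] at this ⊢
        rcases this with h | h
        · exact Or.inl h
        · exact Or.inr (hq.2.2 ⟨hb, h⟩)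
    have := hmin _ hq'
    simpa using this

-- ### kill lemmas

lemma kill2 {k : ℕ} (m1 m2 n : Move)
    (hs : ∀ x : ZMod k, Move.step (Move.step x m1) m2 = Move.step x n)
    (hc1 : ∀ x : ZMod k, Move.covers x m1 = Move.covers x n)
    (hc2 : ∀ x : ZMod k, Move.covers (Move.step x m1) m2 = Move.covers x n)
    {v : List Move} (hp : SP (k := k) (m1 :: m2 :: v)) : False := by
  obtain ⟨B, s, t, hp⟩ := hp
  refine not_shortest_replace (w := [m1, m2]) (w' := [n]) (v := v) hp (by simp) ?_ ?_ (by simp)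
  · simp [endAt, hs]
  · intro y hy
    simp only [coveredSet, Set.mem_insert_iff, Set.mem_empty_iff_false, or_false] at hy ⊢
    rcases hy with h | h
    · rw [h, hc1]
    · rw [h, hc2]

lemma kill3 {k : ℕ} (m1 m2 m3 n1 n2 : Move)
    (hs : ∀ x : ZMod k, Move.step (Move.step (Move.step x m1) m2) m3 = Move.step (Move.step x n1) n2)
    (hc1 : ∀ x : ZMod k, Move.covers x m1 = Move.covers x n1 ∨ Move.covers x m1 = Move.covers (Move.step x n1) n2)
    (hc2 : ∀ x : ZMod k, Move.covers (Move.step x m1) m2 = Move.covers x n1 ∨ Move.covers (Move.step x m1) m2 = Move.covers (Move.step x n1) n2)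
    (hc3 : ∀ x : ZMod k, Move.covers (Move.step (Move.step x m1) m2) m3 = Move.covers x n1 ∨ Move.covers (Move.step (Move.step x m1) m2) m3 = Move.covers (Move.step x n1) n2)
    {v : List Move} (hp : SP (k := k) (m1 :: m2 :: m3 :: v)) : False := by
  obtain ⟨B, s, t, hp⟩ := hp
  refine not_shortest_replace (w := [m1, m2, m3]) (w' := [n1, n2]) (v := v) hp (by simp) ?_ ?_ (by simp)
  · simp [endAt, hs]
  · intro y hy
    simp only [coveredSet, Set.mem_insert_iff, Set.mem_empty_iff_false, or_false] at hy ⊢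
    rcases hy with h | h | h
    · rw [h]; exact hc1 s
    · rw [h]; exact hc2 s
    · rw [h]; exact hc3 s

section killpairs
variable {k : ℕ} {v : List Move}

lemma kill_bb (hp : SP (k := k) (.b :: .b :: v)) : False :=
  kill2 .b .b .b (by intro x; rfl) (by intro x; rfl) (by intro x; rfl) hp
lemma kill_dd (hp : SP (k := k) (.d :: .d :: v)) : False :=
  kill2 .d .d .d (by intro x; rfl) (by intro x; rfl) (by intro x; rfl) hp
lemma kill_ac (hp : SP (k := k) (.a :: .c :: v)) : False :=
  kill2 .a .c .d (by intro x; simp [Move.step]; try ring) (by intro x; rfl) (by intro x; rfl) hp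
lemma kill_ca (hp : SP (k := k) (.c :: .a :: v)) : False :=
  kill2 .c .a .b (by intro x; simp [Move.step]; try ring) (by intro x; rfl)
    (by intro x; simp [Move.step, Move.covers]; try ring) hp
lemma kill_da (hp : SP (k := k) (.d :: .a :: v)) : False :=
  kill2 .d .a .a (by intro x; rfl) (by intro x; rfl) (by intro x; rfl) hp
lemma kill_bc (hp : SP (k := k) (.b :: .c :: v)) : False :=
  kill2 .b .c .c (by intro x; rfl) (by intro x; rfl) (by intro x; rfl) hp
lemma kill_ab (hp : SP (k := k) (.a :: .b :: v)) : False :=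
  kill2 .a .b .a (by intro x; rfl) (by intro x; rfl) (by intro x; rfl) hp
lemma kill_cd (hp : SP (k := k) (.c :: .d :: v)) : False :=
  kill2 .c .d .c (by intro x; rfl) (by intro x; rfl)
    (by intro x; simp [Move.step, Move.covers]; try ring) hp

lemma kill_bdc (hp : SP (k := k) (.b :: .d :: .c :: v)) : False :=
  kill3 .b .d .c .d .c (by intro x; rfl)
    (by intro x; right; rfl)
    (by intro x; left; rfl)
    (by intro x; right; rfl) hp
lemma kill_dba (hp : SP (k := k) (.d :: .b :: .a :: v)) : False :=
  kill3 .d .b .a .b .a (by intro x; rfl)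
    (by intro x; right; rfl)
    (by intro x; left; rfl)
    (by intro x; right; rfl) hp
lemma kill_bdb (hp : SP (k := k) (.b :: .d :: .b :: v)) : False :=
  kill3 .b .d .b .b .d (by intro x; rfl)
    (by intro x; left; rfl)
    (by intro x; right; rfl)
    (by intro x; left; rfl) hp
lemma kill_dbd (hp : SP (k := k) (.d :: .b :: .d :: v)) : False :=
  kill3 .d .b .d .d .b (by intro x; rfl)
    (by intro x; left; rfl)
    (by intro x; right; rfl)
    (by intro x; left; rfl) hp
lemma kill_cbd (hp : SP (k := k) (.c :: .b :: .d :: v)) : False :=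
  kill3 .c .b .d .c .b (by intro x; rfl)
    (by intro x; left; rfl)
    (by intro x; right; rfl)
    (by intro x; left; simp [Move.step, Move.covers]; try ring) hp
lemma kill_adb (hp : SP (k := k) (.a :: .d :: .b :: v)) : False :=
  kill3 .a .d .b .a .d (by intro x; rfl)
    (by intro x; left; rfl)
    (by intro x; right; rfl)
    (by intro x; left; rfl) hp

end killpairs

@[simp] lemma endAt_nil {k : ℕ} (s : ZMod k) : endAt s [] = s := rfl
@[simp] lemma endAt_cons {k : ℕ} (s : ZMod k) (m : Move) (ms : List Move) :
    endAt s (m :: ms) = endAt (Move.step s m) ms := rfl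
@[simp] lemma coveredSet_nil {k : ℕ} (s : ZMod k) : coveredSet s [] = ∅ := rfl
@[simp] lemma coveredSet_cons {k : ℕ} (s : ZMod k) (m : Move) (ms : List Move) :
    coveredSet s (m :: ms) = insert (Move.covers s m) (coveredSet (Move.step s m) ms) := rfl

-- ### K1, K2

lemma kill_K1 {k : ℕ} {v : List Move} (j m : ℕ) (hj : 1 ≤ j) (hm : 1 ≤ m)
    (hp : SP (k := k) (([.b] ++ rA j ++ [.d] ++ rC m ++ [.b]) ++ v)) : False := by
  obtain ⟨B, s, t, hp⟩ := hp
  rcases le_or_gt m j with hc | hc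
  · refine not_shortest_replace (w' := [.b] ++ rA j ++ [.d] ++ rC m) hp (by simp) ?_ ?_ (by simp)
    · simp [endAt_append, endAt_cons, endAt_nil, endAt_rC, endAt_rA, Move.step]; try ring
    · intro y hy
      simp only [coveredSet_append, coveredSet_cons, coveredSet_nil, List.singleton_append,
        endAt_append, endAt_cons, endAt_nil, endAt_rC, endAt_rA,
        Move.step, Move.covers, Set.mem_union, Set.mem_insert_iff, Set.mem_empty_iff_false,
        Set.union_empty, or_false, mem_cov_rC, mem_cov_rA, or_assoc] at hy ⊢
      rcases hy with h | ⟨z, h1, h2, h⟩ | h | ⟨z, h1, h2, h⟩ | h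
      · exact Or.inl h
      · exact Or.inr (Or.inl ⟨z, h1, h2, h⟩)
      · exact Or.inr (Or.inr (Or.inl h))
      · exact Or.inr (Or.inr (Or.inr ⟨z, h1, h2, h⟩))
      · rcases eq_or_lt_of_le hc with he | he
        · exact Or.inl (by rw [h, he]; ring)
        · exact Or.inr (Or.inl ⟨(j : ℤ) - m - 1, by omega, by omega, by rw [h]; push_cast; ring⟩)
  · refine not_shortest_replace (w' := rA j ++ [.d] ++ rC m ++ [.b]) hp (by simp) ?_ ?_ (by simp)
    · simp [endAt_append, endAt_cons, endAt_nil, endAt_rC, endAt_rA, Move.step]; try ring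
    · intro y hy
      simp only [coveredSet_append, coveredSet_cons, coveredSet_nil, List.singleton_append,
        endAt_append, endAt_cons, endAt_nil, endAt_rC, endAt_rA,
        Move.step, Move.covers, Set.mem_union, Set.mem_insert_iff, Set.mem_empty_iff_false,
        Set.union_empty, or_false, mem_cov_rC, mem_cov_rA, or_assoc] at hy ⊢
      rcases hy with h | ⟨z, h1, h2, h⟩ | h | ⟨z, h1, h2, h⟩ | h
      · exact Or.inr (Or.inr (Or.inl ⟨(j : ℤ), by omega, by omega, by rw [h]; push_cast; ring⟩))
      · exact Or.inl ⟨z, h1, h2, h⟩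
      · exact Or.inr (Or.inl h)
      · exact Or.inr (Or.inr (Or.inl ⟨z, h1, h2, h⟩))
      · exact Or.inr (Or.inr (Or.inr h))

lemma kill_K2 {k : ℕ} {v : List Move} (j m : ℕ) (hj : 1 ≤ j) (hm : 1 ≤ m)
    (hp : SP (k := k) (([.d] ++ rC j ++ [.b] ++ rA m ++ [.d]) ++ v)) : False := by
  obtain ⟨B, s, t, hp⟩ := hp
  rcases le_or_gt m j with hc | hc
  · refine not_shortest_replace (w' := [.d] ++ rC j ++ [.b] ++ rA m) hp (by simp) ?_ ?_ (by simp)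
    · simp [endAt_append, endAt_cons, endAt_nil, endAt_rC, endAt_rA, Move.step]; try ring
    · intro y hy
      simp only [coveredSet_append, coveredSet_cons, coveredSet_nil, List.singleton_append,
        endAt_append, endAt_cons, endAt_nil, endAt_rC, endAt_rA,
        Move.step, Move.covers, Set.mem_union, Set.mem_insert_iff, Set.mem_empty_iff_false,
        Set.union_empty, or_false, mem_cov_rC, mem_cov_rA, or_assoc] at hy ⊢
      rcases hy with h | ⟨z, h1, h2, h⟩ | h | ⟨z, h1, h2, h⟩ | h
      · exact Or.inl h
      · exact Or.inr (Or.inl ⟨z, h1, h2, h⟩)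
      · exact Or.inr (Or.inr (Or.inl h))
      · exact Or.inr (Or.inr (Or.inr ⟨z, h1, h2, h⟩))
      · rcases eq_or_lt_of_le hc with he | he
        · exact Or.inl (by rw [h, he]; ring)
        · exact Or.inr (Or.inl ⟨(j : ℤ) - m - 1, by omega, by omega, by rw [h]; push_cast; ring⟩)
  · refine not_shortest_replace (w' := rC j ++ [.b] ++ rA m ++ [.d]) hp (by simp) ?_ ?_ (by simp)
    · simp [endAt_append, endAt_cons, endAt_nil, endAt_rC, endAt_rA, Move.step]; try ring
    · intro y hy
      simp only [coveredSet_append, coveredSet_cons, coveredSet_nil, List.singleton_append,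
        endAt_append, endAt_cons, endAt_nil, endAt_rC, endAt_rA,
        Move.step, Move.covers, Set.mem_union, Set.mem_insert_iff, Set.mem_empty_iff_false,
        Set.union_empty, or_false, mem_cov_rC, mem_cov_rA, or_assoc] at hy ⊢
      rcases hy with h | ⟨z, h1, h2, h⟩ | h | ⟨z, h1, h2, h⟩ | h
      · exact Or.inr (Or.inr (Or.inl ⟨(j : ℤ), by omega, by omega, by rw [h]; push_cast; ring⟩))
      · exact Or.inl ⟨z, h1, h2, h⟩
      · exact Or.inr (Or.inl h)
      · exact Or.inr (Or.inr (Or.inl ⟨z, h1, h2, h⟩))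
      · exact Or.inr (Or.inr (Or.inr h))

-- ### structure theorem

def NF (p : List Move) : Prop :=
  (∃ n, 1 ≤ n ∧ p = rC n) ∨
  (∃ n, 1 ≤ n ∧ p = rA n) ∨
  (∃ i j, p = rC i ++ [.b] ++ rA j) ∨
  (∃ i j, p = rA i ++ [.d] ++ rC j) ∨
  p = [.b, .d] ∨ p = [.d, .b] ∨
  (∃ i j l, 1 ≤ j ∧ p = rC i ++ [.b] ++ rA j ++ [.d] ++ rC l) ∨
  (∃ i j l, 1 ≤ j ∧ p = rA i ++ [.d] ++ rC j ++ [.b] ++ rA l)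

lemma struct {k : ℕ} (p : List Move) (hp : SP (k := k) p) (hne : p ≠ []) : NF p := by
  induction p with
  | nil => exact absurd rfl hne
  | cons m p' ih =>
    rcases eq_or_ne p' [] with rfl | hne'
    · cases m
      · exact Or.inr (Or.inl ⟨1, le_refl 1, rfl⟩)
      · exact Or.inr (Or.inr (Or.inl ⟨0, 0, rfl⟩))
      · exact Or.inl ⟨1, le_refl 1, rfl⟩
      · exact Or.inr (Or.inr (Or.inr (Or.inl ⟨0, 0, rfl⟩)))
    · have hNF := ih (SP_tail hp hne') hne'
      cases m
      case a =>
        rcases hNF with ⟨n, hn, rfl⟩ | ⟨n, hn, rfl⟩ | ⟨i, j, rfl⟩ | ⟨i, j, rfl⟩ | rfl | rfl |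
          ⟨i, j, l, hj, rfl⟩ | ⟨i, j, l, hj, rfl⟩
        · rcases n with _ | n
          · omega
          simp only [List.replicate_succ, List.cons_append] at hp
          exact (kill_ac hp).elim
        · exact Or.inr (Or.inl ⟨n + 1, by omega, by simp [List.replicate_succ]⟩)
        · rcases i with _ | i
          · simp only [List.replicate_zero, List.nil_append, List.cons_append] at hp
            exact (kill_ab hp).elim
          · simp only [List.replicate_succ, List.cons_append, List.append_assoc] at hp
            exact (kill_ac hp).elim
        · exact Or.inr (Or.inr (Or.inr (Or.inl ⟨i + 1, j, by simp [List.replicate_succ]⟩)))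
        · exact (kill_ab hp).elim
        · exact (kill_adb hp).elim
        · rcases i with _ | i
          · simp only [List.replicate_zero, List.nil_append, List.cons_append,
              List.append_assoc] at hp
            exact (kill_ab hp).elim
          · simp only [List.replicate_succ, List.cons_append, List.append_assoc] at hp
            exact (kill_ac hp).elim
        · exact Or.inr (Or.inr (Or.inr (Or.inr (Or.inr (Or.inr (Or.inr
            ⟨i + 1, j, l, hj, by simp [List.replicate_succ]⟩))))))
      case c =>
        rcases hNF with ⟨n, hn, rfl⟩ | ⟨n, hn, rfl⟩ | ⟨i, j, rfl⟩ | ⟨i, j, rfl⟩ | rfl | rfl |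
          ⟨i, j, l, hj, rfl⟩ | ⟨i, j, l, hj, rfl⟩
        · exact Or.inl ⟨n + 1, by omega, by simp [List.replicate_succ]⟩
        · rcases n with _ | n
          · omega
          simp only [List.replicate_succ, List.cons_append] at hp
          exact (kill_ca hp).elim
        · exact Or.inr (Or.inr (Or.inl ⟨i + 1, j, by simp [List.replicate_succ]⟩))
        · rcases i with _ | i
          · simp only [List.replicate_zero, List.nil_append, List.cons_append] at hp
            exact (kill_cd hp).elim
          · simp only [List.replicate_succ, List.cons_append, List.append_assoc] at hp
            exact (kill_ca hp).elim
        · exact (kill_cbd hp).elim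
        · exact (kill_cd hp).elim
        · exact Or.inr (Or.inr (Or.inr (Or.inr (Or.inr (Or.inr (Or.inl
            ⟨i + 1, j, l, hj, by simp [List.replicate_succ]⟩))))))
        · rcases i with _ | i
          · simp only [List.replicate_zero, List.nil_append, List.cons_append,
              List.append_assoc] at hp
            exact (kill_cd hp).elim
          · simp only [List.replicate_succ, List.cons_append, List.append_assoc] at hp
            exact (kill_ca hp).elim
      case b =>
        rcases hNF with ⟨n, hn, rfl⟩ | ⟨n, hn, rfl⟩ | ⟨i, j, rfl⟩ | ⟨i, j, rfl⟩ | rfl | rfl |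
          ⟨i, j, l, hj, rfl⟩ | ⟨i, j, l, hj, rfl⟩
        · rcases n with _ | n
          · omega
          simp only [List.replicate_succ, List.cons_append] at hp
          exact (kill_bc hp).elim
        · exact Or.inr (Or.inr (Or.inl ⟨0, n, by simp⟩))
        · rcases i with _ | i
          · simp only [List.replicate_zero, List.nil_append, List.cons_append] at hp
            exact (kill_bb hp).elim
          · simp only [List.replicate_succ, List.cons_append, List.append_assoc] at hp
            exact (kill_bc hp).elim
        · rcases i with _ | i
          · rcases j with _ | j
            · exact Or.inr (Or.inr (Or.inr (Or.inr (Or.inl (by simp)))))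
            · simp only [List.replicate_zero, List.nil_append, List.cons_append,
                List.replicate_succ] at hp
              exact (kill_bdc hp).elim
          · refine Or.inr (Or.inr (Or.inr (Or.inr (Or.inr (Or.inr (Or.inl
              ⟨0, i + 1, j, by omega, by simp⟩))))))
        · exact (kill_bb hp).elim
        · exact (kill_bdb hp).elim
        · rcases i with _ | i
          · simp only [List.replicate_zero, List.nil_append, List.cons_append,
              List.append_assoc] at hp
            exact (kill_bb hp).elim
          · simp only [List.replicate_succ, List.cons_append, List.append_assoc] at hp
            exact (kill_bc hp).elim
        · rcases i with _ | i
          · rcases j with _ | j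
            · omega
            simp only [List.replicate_zero, List.nil_append, List.cons_append,
              List.replicate_succ, List.append_assoc] at hp
            exact (kill_bdc hp).elim
          · have hp' : SP (k := k) (([.b] ++ rA (i+1) ++ [.d] ++ rC j ++ [.b]) ++ rA l) := by
              simpa [List.append_assoc] using hp
            exact (kill_K1 (i+1) j (by omega) hj hp').elim
      case d =>
        rcases hNF with ⟨n, hn, rfl⟩ | ⟨n, hn, rfl⟩ | ⟨i, j, rfl⟩ | ⟨i, j, rfl⟩ | rfl | rfl |
          ⟨i, j, l, hj, rfl⟩ | ⟨i, j, l, hj, rfl⟩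
        · exact Or.inr (Or.inr (Or.inr (Or.inl ⟨0, n, by simp⟩)))
        · rcases n with _ | n
          · omega
          simp only [List.replicate_succ, List.cons_append] at hp
          exact (kill_da hp).elim
        · rcases i with _ | i
          · rcases j with _ | j
            · exact Or.inr (Or.inr (Or.inr (Or.inr (Or.inr (Or.inl (by simp))))))
            · simp only [List.replicate_zero, List.nil_append, List.cons_append,
                List.replicate_succ] at hp
              exact (kill_dba hp).elim
          · refine Or.inr (Or.inr (Or.inr (Or.inr (Or.inr (Or.inr (Or.inr
              ⟨0, i + 1, j, by omega, by simp⟩))))))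
        · rcases i with _ | i
          · simp only [List.replicate_zero, List.nil_append, List.cons_append] at hp
            exact (kill_dd hp).elim
          · simp only [List.replicate_succ, List.cons_append, List.append_assoc] at hp
            exact (kill_da hp).elim
        · exact (kill_dbd hp).elim
        · exact (kill_dd hp).elim
        · rcases i with _ | i
          · rcases j with _ | j
            · omega
            simp only [List.replicate_zero, List.nil_append, List.cons_append,
              List.replicate_succ, List.append_assoc] at hp
            exact (kill_dba hp).elim
          · have hp' : SP (k := k) (([.d] ++ rC (i+1) ++ [.b] ++ rA j ++ [.d]) ++ rC l) := by
              simpa [List.append_assoc] using hp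
            exact (kill_K2 (i+1) j (by omega) hj hp').elim
        · rcases i with _ | i
          · simp only [List.replicate_zero, List.nil_append, List.cons_append,
              List.append_assoc] at hp
            exact (kill_dd hp).elim
          · simp only [List.replicate_succ, List.cons_append, List.append_assoc] at hp
            exact (kill_da hp).elim

-- ### turnCount lemmas

@[simp] lemma rC_succ (n : ℕ) : rC (n + 1) = Move.c :: rC n := rfl
@[simp] lemma rA_succ (n : ℕ) : rA (n + 1) = Move.a :: rA n := rfl

lemma tc_nil : turnCount [] = 0 := rfl

lemma turnCount_cons (m : Move) (q : List Move) :
    turnCount (m :: q) = (if ((m :: q).take 3 = [Move.c, Move.b, Move.a] ∨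
      (m :: q).take 3 = [Move.a, Move.d, Move.c]) then 1 else 0) + turnCount q := by
  unfold turnCount
  rw [List.length_cons, List.range_succ_eq_map, List.filter_cons, List.filter_map]
  simp only [Function.comp_def, List.drop_succ_cons, List.drop_zero, List.length_map]
  by_cases h : (m = Move.c ∧ List.take 2 q = [Move.b, Move.a] ∨
      m = Move.a ∧ List.take 2 q = [Move.d, Move.c]) <;>
    (simp [h, List.take_succ_cons]; try omega)

lemma tc_b (q : List Move) : turnCount (.b :: q) = turnCount q := by
  rw [turnCount_cons]; simp

lemma tc_d (q : List Move) : turnCount (.d :: q) = turnCount q := by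
  rw [turnCount_cons]; simp

lemma tc_c (q : List Move) :
    turnCount (.c :: q) = turnCount q + (if q.take 2 = [Move.b, Move.a] then 1 else 0) := by
  rw [turnCount_cons]
  by_cases h : q.take 2 = [Move.b, Move.a] <;> simp [h, List.take_succ_cons] <;> omega

lemma tc_a (q : List Move) :
    turnCount (.a :: q) = turnCount q + (if q.take 2 = [Move.d, Move.c] then 1 else 0) := by
  rw [turnCount_cons]
  by_cases h : q.take 2 = [Move.d, Move.c] <;> simp [h, List.take_succ_cons] <;> omega

lemma tc_rC (n : ℕ) (q : List Move) :
    turnCount (rC n ++ q) = turnCount q +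
      (if 1 ≤ n ∧ q.take 2 = [Move.b, Move.a] then 1 else 0) := by
  induction n with
  | zero => simp
  | succ n ih =>
    rw [rC_succ, List.cons_append, tc_c, ih]
    rcases n with _ | n
    · simp
    · have h2 : ((rC (n + 1) ++ q).take 2) ≠ [Move.b, Move.a] := by
        rw [rC_succ, List.cons_append, List.take_succ_cons]
        simp
      by_cases hP : q.take 2 = [Move.b, Move.a] <;> simp [h2, hP]

lemma tc_rA (n : ℕ) (q : List Move) :
    turnCount (rA n ++ q) = turnCount q +
      (if 1 ≤ n ∧ q.take 2 = [Move.d, Move.c] then 1 else 0) := by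
  induction n with
  | zero => simp
  | succ n ih =>
    rw [rA_succ, List.cons_append, tc_a, ih]
    rcases n with _ | n
    · simp
    · have h2 : ((rA (n + 1) ++ q).take 2) ≠ [Move.d, Move.c] := by
        rw [rA_succ, List.cons_append, List.take_succ_cons]
        simp
      by_cases hP : q.take 2 = [Move.d, Move.c] <;> simp [h2, hP]

lemma tc_rC0 (n : ℕ) : turnCount (rC n) = 0 := by
  simpa [tc_nil] using tc_rC n []

lemma tc_rA0 (n : ℕ) : turnCount (rA n) = 0 := by
  simpa [tc_nil] using tc_rA n []

lemma take2_b_rA (j : ℕ) (X : List Move) (hj : 1 ≤ j) :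
    ((Move.b :: (rA j ++ X)).take 2) = [Move.b, Move.a] := by
  rcases j with _ | j
  · omega
  · simp

lemma take2_d_rC (j : ℕ) (X : List Move) (hj : 1 ≤ j) :
    ((Move.d :: (rC j ++ X)).take 2) = [Move.d, Move.c] := by
  rcases j with _ | j
  · omega
  · simp

lemma tc_F4 (i j l : ℕ) (hj : 1 ≤ j) :
    turnCount (rC i ++ [Move.b] ++ rA j ++ [Move.d] ++ rC l) =
      (if 1 ≤ i then 1 else 0) + (if 1 ≤ l then 1 else 0) := by
  have e : rC i ++ [Move.b] ++ rA j ++ [Move.d] ++ rC l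
      = rC i ++ (Move.b :: (rA j ++ (Move.d :: rC l))) := by simp
  rw [e, tc_rC, tc_b, tc_rA, tc_d, tc_rC0, take2_b_rA _ _ hj]
  rcases l with _ | l <;> by_cases hi : 1 ≤ i <;> simp [hj, hi]

lemma tc_F5 (i j l : ℕ) (hj : 1 ≤ j) :
    turnCount (rA i ++ [Move.d] ++ rC j ++ [Move.b] ++ rA l) =
      (if 1 ≤ i then 1 else 0) + (if 1 ≤ l then 1 else 0) := by
  have e : rA i ++ [Move.d] ++ rC j ++ [Move.b] ++ rA l
      = rA i ++ (Move.d :: (rC j ++ (Move.b :: rA l))) := by simp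
  rw [e, tc_rA, tc_d, tc_rC, tc_b, tc_rA0, take2_d_rC _ _ hj]
  rcases l with _ | l <;> by_cases hi : 1 ≤ i <;> simp [hj, hi]

lemma tc_F1 (i j : ℕ) : turnCount (rC i ++ [Move.b] ++ rA j) ≤ 1 := by
  have e : rC i ++ [Move.b] ++ rA j = rC i ++ (Move.b :: rA j) := by simp
  rw [e, tc_rC, tc_b, tc_rA0]
  split_ifs <;> omega

lemma tc_F2 (i j : ℕ) : turnCount (rA i ++ [Move.d] ++ rC j) ≤ 1 := by
  have e : rA i ++ [Move.d] ++ rC j = rA i ++ (Move.d :: rC j) := by simp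
  rw [e, tc_rA, tc_d, tc_rC0]
  split_ifs <;> omega

lemma tc_bd : turnCount [Move.b, Move.d] = 0 := by
  rw [tc_b, tc_d, tc_nil]

lemma tc_db : turnCount [Move.d, Move.b] = 0 := by
  rw [tc_d, tc_b, tc_nil]

-- ### constraint lemmas

lemma constraintA {k : ℕ} (hk : 2 ≤ k) {B : Set (ZMod k)} {s t : ZMod k} (i j l : ℕ)
    (hi : 1 ≤ i) (hj : 1 ≤ j) (hl : 1 ≤ l)
    (hp : ShortestPath B s t (rC i ++ [Move.b] ++ rA j ++ [Move.d] ++ rC l)) :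
    i + l ≤ j ∧ j + 2 ≤ k := by
  constructor
  · by_contra hcon
    push_neg at hcon
    have hmain : j < i + l := hcon
    rcases le_or_gt i j with hij | hij <;> rcases le_or_gt l j with hlj | hlj
    · -- (iii) i ≤ j, l ≤ j : mirror path
      refine not_shortest_replace
        (w' := rA (j - i) ++ [Move.d] ++ rC j ++ [Move.b] ++ rA (j - l)) (v := [])
        (by simpa [List.append_assoc] using hp) (by simp) ?_ ?_ (by simp; omega)
      · simp only [endAt_append, endAt_cons, endAt_nil, endAt_rC, endAt_rA, Move.step]
        rw [Nat.cast_sub hij, Nat.cast_sub hlj]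
        ring
      · intro y hy
        simp only [coveredSet_append, coveredSet_cons, coveredSet_nil, List.singleton_append,
          endAt_append, endAt_cons, endAt_nil, endAt_rC, endAt_rA,
          Move.step, Move.covers, Set.mem_union, Set.mem_insert_iff, Set.mem_empty_iff_false,
          Set.union_empty, or_false, mem_cov_rC, mem_cov_rA, or_assoc] at hy ⊢
        rcases hy with ⟨z, h1, h2, h⟩ | h | ⟨z, h1, h2, h⟩ | h | ⟨z, h1, h2, h⟩
        · exact Or.inr (Or.inr (Or.inl ⟨z + ((j : ℤ) - i), by omega, by push_cast; omega,
            by rw [h, Nat.cast_sub hij]; push_cast; ring⟩))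
        · exact Or.inr (Or.inr (Or.inr (Or.inl
            (by rw [h, Nat.cast_sub hij]; push_cast; ring))))
        · exact Or.inr (Or.inr (Or.inl ⟨(j : ℤ) - z - 1, by omega, by push_cast; omega,
            by rw [h, Nat.cast_sub hij]; push_cast; ring⟩))
        · exact Or.inr (Or.inl (by rw [h, Nat.cast_sub hij]; push_cast; ring))
        · exact Or.inr (Or.inr (Or.inl ⟨z, by omega, by push_cast; omega,
            by rw [h, Nat.cast_sub hij]; push_cast; ring⟩))
    · -- (i) i ≤ j, j < l
      refine not_shortest_replace
        (w' := rA (j - i) ++ [Move.d] ++ rC l) (v := [])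
        (by simpa [List.append_assoc] using hp) (by simp) ?_ ?_ (by simp; omega)
      · simp only [endAt_append, endAt_cons, endAt_nil, endAt_rC, endAt_rA, Move.step]
        rw [Nat.cast_sub hij]
        ring
      · intro y hy
        simp only [coveredSet_append, coveredSet_cons, coveredSet_nil, List.singleton_append,
          endAt_append, endAt_cons, endAt_nil, endAt_rC, endAt_rA,
          Move.step, Move.covers, Set.mem_union, Set.mem_insert_iff, Set.mem_empty_iff_false,
          Set.union_empty, or_false, mem_cov_rC, mem_cov_rA, or_assoc] at hy ⊢
        rcases hy with ⟨z, h1, h2, h⟩ | h | ⟨z, h1, h2, h⟩ | h | ⟨z, h1, h2, h⟩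
        · exact Or.inr (Or.inr ⟨z + ((j : ℤ) - i), by omega, by push_cast; omega,
            by rw [h, Nat.cast_sub hij]; push_cast; ring⟩)
        · exact Or.inr (Or.inr ⟨(j : ℤ), by omega, by push_cast; omega,
            by rw [h, Nat.cast_sub hij]; push_cast; ring⟩)
        · exact Or.inr (Or.inr ⟨(j : ℤ) - z - 1, by omega, by push_cast; omega,
            by rw [h, Nat.cast_sub hij]; push_cast; ring⟩)
        · exact Or.inr (Or.inl (by rw [h, Nat.cast_sub hij]; push_cast; ring))
        · exact Or.inr (Or.inr ⟨z, by omega, by push_cast; omega,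
            by rw [h, Nat.cast_sub hij]; push_cast; ring⟩)
    · -- (iv) j < i, l ≤ j
      refine not_shortest_replace
        (w' := rC i ++ [Move.b] ++ rA (j - l)) (v := [])
        (by simpa [List.append_assoc] using hp) (by simp) ?_ ?_ (by simp; omega)
      · simp only [endAt_append, endAt_cons, endAt_nil, endAt_rC, endAt_rA, Move.step]
        rw [Nat.cast_sub hlj]
        ring
      · intro y hy
        simp only [coveredSet_append, coveredSet_cons, coveredSet_nil, List.singleton_append,
          endAt_append, endAt_cons, endAt_nil, endAt_rC, endAt_rA,
          Move.step, Move.covers, Set.mem_union, Set.mem_insert_iff, Set.mem_empty_iff_false,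
          Set.union_empty, or_false, mem_cov_rC, mem_cov_rA, or_assoc] at hy ⊢
        rcases hy with ⟨z, h1, h2, h⟩ | h | ⟨z, h1, h2, h⟩ | h | ⟨z, h1, h2, h⟩
        · exact Or.inl ⟨z, h1, h2, h⟩
        · exact Or.inr (Or.inl h)
        · exact Or.inl ⟨(i : ℤ) - z - 1, by omega, by push_cast; omega,
            by rw [h]; push_cast; ring⟩
        · exact Or.inl ⟨(i : ℤ) - j - 1, by omega, by push_cast; omega,
            by rw [h]; push_cast; ring⟩
        · exact Or.inl ⟨(i : ℤ) - j + z, by omega, by push_cast; omega,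
            by rw [h]; push_cast; ring⟩
    · -- (ii) j < i, j < l
      refine not_shortest_replace
        (w' := rC (i + l - j)) (v := [])
        (by simpa [List.append_assoc] using hp) (by simp; omega) ?_ ?_ (by simp; omega)
      · simp only [endAt_append, endAt_cons, endAt_nil, endAt_rC, endAt_rA, Move.step]
        rw [Nat.cast_sub (by omega : j ≤ i + l)]
        push_cast
        ring
      · intro y hy
        simp only [coveredSet_append, coveredSet_cons, coveredSet_nil, List.singleton_append,
          endAt_append, endAt_cons, endAt_nil, endAt_rC, endAt_rA,
          Move.step, Move.covers, Set.mem_union, Set.mem_insert_iff, Set.mem_empty_iff_false,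
          Set.union_empty, or_false, mem_cov_rC, mem_cov_rA, or_assoc] at hy ⊢
        rcases hy with ⟨z, h1, h2, h⟩ | h | ⟨z, h1, h2, h⟩ | h | ⟨z, h1, h2, h⟩
        · exact ⟨z, by omega, by push_cast; omega, h⟩
        · exact ⟨(i : ℤ), by omega, by push_cast; omega, by rw [h]; push_cast; ring⟩
        · exact ⟨(i : ℤ) - z - 1, by omega, by push_cast; omega, by rw [h]; push_cast; ring⟩
        · exact ⟨(i : ℤ) - j - 1, by omega, by push_cast; omega, by rw [h]; push_cast; ring⟩
        · exact ⟨(i : ℤ) - j + z, by omega, by push_cast; omega, by rw [h]; push_cast; ring⟩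
  · by_contra hcon
    push_neg at hcon
    have hkj : k ≤ j + 1 := by omega
    refine not_shortest_replace
      (w' := rC i ++ [Move.b] ++ rA j ++ rC l) (v := [])
      (by simpa [List.append_assoc] using hp) (by simp) ?_ ?_ (by simp)
    · simp only [endAt_append, endAt_cons, endAt_nil, endAt_rC, endAt_rA, Move.step]
    · intro y hy
      simp only [coveredSet_append, coveredSet_cons, coveredSet_nil, List.singleton_append,
        endAt_append, endAt_cons, endAt_nil, endAt_rC, endAt_rA,
        Move.step, Move.covers, Set.mem_union, Set.mem_insert_iff, Set.mem_empty_iff_false,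
        Set.union_empty, or_false, mem_cov_rC, mem_cov_rA, or_assoc] at hy ⊢
      have hk0 : ((k : ℤ) : ZMod k) = 0 := by
        push_cast
        exact ZMod.natCast_self k
      rcases hy with ⟨z, h1, h2, h⟩ | h | ⟨z, h1, h2, h⟩ | h | ⟨z, h1, h2, h⟩
      · exact Or.inl ⟨z, h1, h2, h⟩
      · exact Or.inr (Or.inl h)
      · exact Or.inr (Or.inr (Or.inl ⟨z, h1, h2, h⟩))
      · -- the dropped d-move: y = s + i - j - 1; use wrap-around
        rcases eq_or_lt_of_le hkj with hke | hke
        · -- k = j + 1 : equals s + i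
          refine Or.inr (Or.inl ?_)
          rw [h]
          have hz : ((j : ZMod k) + 1) = 0 := by
            have h2 : ((j + 1 : ℕ) : ZMod k) = 0 := by rw [← hke]; exact ZMod.natCast_self k
            push_cast at h2
            exact h2
          rw [sub_sub, hz, sub_zero]
        · -- k ≤ j : a-run covers it
          refine Or.inr (Or.inr (Or.inl ⟨(j : ℤ) - k, by omega, by omega, ?_⟩))
          rw [h]
          push_cast [hk0]
          ring
      · exact Or.inr (Or.inr (Or.inr ⟨z, h1, h2, h⟩))

lemma constraintB {k : ℕ} (hk : 2 ≤ k) {B : Set (ZMod k)} {s t : ZMod k} (i j l : ℕ)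
    (hi : 1 ≤ i) (hj : 1 ≤ j) (hl : 1 ≤ l)
    (hp : ShortestPath B s t (rA i ++ [Move.d] ++ rC j ++ [Move.b] ++ rA l)) :
    i + l ≤ j ∧ j + 2 ≤ k := by
  constructor
  · by_contra hcon
    push_neg at hcon
    have hmain : j < i + l := hcon
    rcases le_or_gt i j with hij | hij <;> rcases le_or_gt l j with hlj | hlj
    · -- (iii') i ≤ j, l ≤ j : mirror path
      refine not_shortest_replace
        (w' := rC (j - i) ++ [Move.b] ++ rA j ++ [Move.d] ++ rC (j - l)) (v := [])
        (by simpa [List.append_assoc] using hp) (by simp) ?_ ?_ (by simp; omega)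
      · simp only [endAt_append, endAt_cons, endAt_nil, endAt_rC, endAt_rA, Move.step]
        rw [Nat.cast_sub hij, Nat.cast_sub hlj]
        ring
      · intro y hy
        simp only [coveredSet_append, coveredSet_cons, coveredSet_nil, List.singleton_append,
          endAt_append, endAt_cons, endAt_nil, endAt_rC, endAt_rA,
          Move.step, Move.covers, Set.mem_union, Set.mem_insert_iff, Set.mem_empty_iff_false,
          Set.union_empty, or_false, mem_cov_rC, mem_cov_rA, or_assoc] at hy ⊢
        rcases hy with ⟨z, h1, h2, h⟩ | h | ⟨z, h1, h2, h⟩ | h | ⟨z, h1, h2, h⟩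
        · exact Or.inr (Or.inr (Or.inl ⟨(j : ℤ) - i + z, by omega, by push_cast; omega,
            by rw [h, Nat.cast_sub hij]; push_cast; ring⟩))
        · exact Or.inr (Or.inr (Or.inr (Or.inl
            (by rw [h, Nat.cast_sub hij]; push_cast; ring))))
        · exact Or.inr (Or.inr (Or.inl ⟨(j : ℤ) - z - 1, by omega, by push_cast; omega,
            by rw [h, Nat.cast_sub hij]; push_cast; ring⟩))
        · exact Or.inr (Or.inl (by rw [h, Nat.cast_sub hij]; push_cast; ring))
        · exact Or.inr (Or.inr (Or.inl ⟨z, by omega, by push_cast; omega,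
            by rw [h, Nat.cast_sub hij]; push_cast; ring⟩))
    · -- (i') i ≤ j, j < l
      refine not_shortest_replace
        (w' := rC (j - i) ++ [Move.b] ++ rA l) (v := [])
        (by simpa [List.append_assoc] using hp) (by simp) ?_ ?_ (by simp; omega)
      · simp only [endAt_append, endAt_cons, endAt_nil, endAt_rC, endAt_rA, Move.step]
        rw [Nat.cast_sub hij]
        ring
      · intro y hy
        simp only [coveredSet_append, coveredSet_cons, coveredSet_nil, List.singleton_append,
          endAt_append, endAt_cons, endAt_nil, endAt_rC, endAt_rA,
          Move.step, Move.covers, Set.mem_union, Set.mem_insert_iff, Set.mem_empty_iff_false,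
          Set.union_empty, or_false, mem_cov_rC, mem_cov_rA, or_assoc] at hy ⊢
        rcases hy with ⟨z, h1, h2, h⟩ | h | ⟨z, h1, h2, h⟩ | h | ⟨z, h1, h2, h⟩
        · exact Or.inr (Or.inr ⟨(j : ℤ) - i + z, by omega, by push_cast; omega,
            by rw [h, Nat.cast_sub hij]; push_cast; ring⟩)
        · exact Or.inr (Or.inr ⟨(j : ℤ), by omega, by push_cast; omega,
            by rw [h, Nat.cast_sub hij]; push_cast; ring⟩)
        · exact Or.inr (Or.inr ⟨(j : ℤ) - z - 1, by omega, by push_cast; omega,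
            by rw [h, Nat.cast_sub hij]; push_cast; ring⟩)
        · exact Or.inr (Or.inl (by rw [h, Nat.cast_sub hij]; push_cast; ring))
        · exact Or.inr (Or.inr ⟨z, by omega, by push_cast; omega,
            by rw [h, Nat.cast_sub hij]; push_cast; ring⟩)
    · -- (iv') j < i, l ≤ j
      refine not_shortest_replace
        (w' := rA i ++ [Move.d] ++ rC (j - l)) (v := [])
        (by simpa [List.append_assoc] using hp) (by simp) ?_ ?_ (by simp; omega)
      · simp only [endAt_append, endAt_cons, endAt_nil, endAt_rC, endAt_rA, Move.step]
        rw [Nat.cast_sub hlj]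
        ring
      · intro y hy
        simp only [coveredSet_append, coveredSet_cons, coveredSet_nil, List.singleton_append,
          endAt_append, endAt_cons, endAt_nil, endAt_rC, endAt_rA,
          Move.step, Move.covers, Set.mem_union, Set.mem_insert_iff, Set.mem_empty_iff_false,
          Set.union_empty, or_false, mem_cov_rC, mem_cov_rA, or_assoc] at hy ⊢
        rcases hy with ⟨z, h1, h2, h⟩ | h | ⟨z, h1, h2, h⟩ | h | ⟨z, h1, h2, h⟩
        · exact Or.inl ⟨z, h1, h2, h⟩
        · exact Or.inr (Or.inl h)
        · exact Or.inl ⟨(i : ℤ) - z - 1, by omega, by push_cast; omega,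
            by rw [h]; push_cast; ring⟩
        · exact Or.inl ⟨(i : ℤ) - j - 1, by omega, by push_cast; omega,
            by rw [h]; push_cast; ring⟩
        · exact Or.inl ⟨(i : ℤ) - j + z, by omega, by push_cast; omega,
            by rw [h]; push_cast; ring⟩
    · -- (ii') j < i, j < l
      refine not_shortest_replace
        (w' := rA (i + l - j)) (v := [])
        (by simpa [List.append_assoc] using hp) (by simp; omega) ?_ ?_ (by simp; omega)
      · simp only [endAt_append, endAt_cons, endAt_nil, endAt_rC, endAt_rA, Move.step]
        rw [Nat.cast_sub (by omega : j ≤ i + l)]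
        push_cast
        ring
      · intro y hy
        simp only [coveredSet_append, coveredSet_cons, coveredSet_nil, List.singleton_append,
          endAt_append, endAt_cons, endAt_nil, endAt_rC, endAt_rA,
          Move.step, Move.covers, Set.mem_union, Set.mem_insert_iff, Set.mem_empty_iff_false,
          Set.union_empty, or_false, mem_cov_rC, mem_cov_rA, or_assoc] at hy ⊢
        rcases hy with ⟨z, h1, h2, h⟩ | h | ⟨z, h1, h2, h⟩ | h | ⟨z, h1, h2, h⟩
        · exact ⟨z, by omega, by push_cast; omega, h⟩
        · exact ⟨(i : ℤ), by omega, by push_cast; omega, by rw [h]; push_cast; ring⟩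
        · exact ⟨(i : ℤ) - z - 1, by omega, by push_cast; omega, by rw [h]; push_cast; ring⟩
        · exact ⟨(i : ℤ) - j - 1, by omega, by push_cast; omega, by rw [h]; push_cast; ring⟩
        · exact ⟨(i : ℤ) - j + z, by omega, by push_cast; omega, by rw [h]; push_cast; ring⟩
  · by_contra hcon
    push_neg at hcon
    have hkj : k ≤ j + 1 := by omega
    refine not_shortest_replace
      (w' := rA i ++ [Move.d] ++ rC j ++ rA l) (v := [])
      (by simpa [List.append_assoc] using hp) (by simp) ?_ ?_ (by simp)
    · simp only [endAt_append, endAt_cons, endAt_nil, endAt_rC, endAt_rA, Move.step]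
    · intro y hy
      simp only [coveredSet_append, coveredSet_cons, coveredSet_nil, List.singleton_append,
        endAt_append, endAt_cons, endAt_nil, endAt_rC, endAt_rA,
        Move.step, Move.covers, Set.mem_union, Set.mem_insert_iff, Set.mem_empty_iff_false,
        Set.union_empty, or_false, mem_cov_rC, mem_cov_rA, or_assoc] at hy ⊢
      have hk0 : ((k : ℤ) : ZMod k) = 0 := by
        push_cast
        exact ZMod.natCast_self k
      rcases hy with ⟨z, h1, h2, h⟩ | h | ⟨z, h1, h2, h⟩ | h | ⟨z, h1, h2, h⟩
      · exact Or.inl ⟨z, h1, h2, h⟩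
      · exact Or.inr (Or.inl h)
      · exact Or.inr (Or.inr (Or.inl ⟨z, h1, h2, h⟩))
      · -- the dropped b-move: y = s - i + j
        rcases eq_or_lt_of_le hkj with hke | hke
        · -- k = j + 1 : equals s - i - 1
          refine Or.inr (Or.inl ?_)
          rw [h]
          have hz : ((j : ZMod k) + 1) = 0 := by
            have h2 : ((j + 1 : ℕ) : ZMod k) = 0 := by rw [← hke]; exact ZMod.natCast_self k
            push_cast at h2
            exact h2
          have : (j : ZMod k) = -1 := by linear_combination hz
          rw [this]
          ring
        · -- k ≤ j : c-run covers it
          refine Or.inr (Or.inr (Or.inl ⟨(j : ℤ) - k, by omega, by omega, ?_⟩))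
          rw [h]
          push_cast [hk0]
          ring
      · exact Or.inr (Or.inr (Or.inr ⟨z, h1, h2, h⟩))

/-- any shortest valid path has at most 2 turns, and if it has exactly
2 turns then it is of the form c^i b a^j d c^l or a^i d c^j b a^l with
k−1 > j > i ≥ 1 and 1 ≤ l ≤ j−i. -/
theorem at_most_two_turns (k : ℕ) (hk : 2 ≤ k) (B : Set (ZMod k)) (s t : ZMod k)
    (p : List Move) (hp : ShortestPath B s t p) :
    turnCount p ≤ 2 ∧
    (turnCount p = 2 → ∃ i j l : ℕ, 1 ≤ i ∧ i < j ∧ j < k - 1 ∧ 1 ≤ l ∧ l ≤ j - i ∧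
      (p = List.replicate i Move.c ++ [Move.b] ++ List.replicate j Move.a ++
            [Move.d] ++ List.replicate l Move.c ∨
       p = List.replicate i Move.a ++ [Move.d] ++ List.replicate j Move.c ++
            [Move.b] ++ List.replicate l Move.a)) := by
  have hne : p ≠ [] := hp.1.1
  have hNF := struct p ⟨B, s, t, hp⟩ hne
  rcases hNF with ⟨n, hn, rfl⟩ | ⟨n, hn, rfl⟩ | ⟨i, j, rfl⟩ | ⟨i, j, rfl⟩ | rfl | rfl |
    ⟨i, j, l, hj, rfl⟩ | ⟨i, j, l, hj, rfl⟩
  · rw [tc_rC0]; exact ⟨by omega, by omega⟩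
  · rw [tc_rA0]; exact ⟨by omega, by omega⟩
  · have := tc_F1 i j; exact ⟨by omega, by omega⟩
  · have := tc_F2 i j; exact ⟨by omega, by omega⟩
  · rw [tc_bd]; exact ⟨by omega, by omega⟩
  · rw [tc_db]; exact ⟨by omega, by omega⟩
  · rw [tc_F4 i j l hj]
    constructor
    · split_ifs <;> omega
    · intro h2
      have hil : 1 ≤ i ∧ 1 ≤ l := by split_ifs at h2 <;> omega
      obtain ⟨hc1, hc2⟩ := constraintA hk i j l hil.1 hj hil.2 hp
      exact ⟨i, j, l, hil.1, by omega, by omega, hil.2, by omega, Or.inl rfl⟩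
  · rw [tc_F5 i j l hj]
    constructor
    · split_ifs <;> omega
    · intro h2
      have hil : 1 ≤ i ∧ 1 ≤ l := by split_ifs at h2 <;> omega
      obtain ⟨hc1, hc2⟩ := constraintB hk i j l hil.1 hj hil.2 hp
      exact ⟨i, j, l, hil.1, by omega, by omega, hil.2, by omega, Or.inr rfl⟩
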